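/- arXiv:2506.13527 — 2 statements merged into one kernel-verified Lean document; each statement's English description precedes it below -/
import Mathlib

section
/- Let D be a triangulated category that is 'local', i.e., the zero thick subcategory 0 is prime with minimal overcategory 0̄. Then for any nonzero object F ∈ D and any nonzero object p ∈ 0̄, we have Hom^*(F, p) ≠ 0, i.e., Hom(F, p[n]) ≠ 0 for some integer n. -/
/-!
STATEMENT 7: Let `D` be a triangulated category which is 'local': the zero thick
subcategory is prime, i.e. the set of thick subcategories containing a nonzero object
has a smallest element `0̄`.  Then for any nonzero object `F ∈ D` and any nonzero
`p ∈ 0̄`, `Hom^*(F, p) ≠ 0`, i.e. `Hom(F, p⟦n⟧) ≠ 0` for some `n : ℤ`.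
-/

open CategoryTheory Limits Pretriangulated

namespace Stmt7

variable {D : Type*} [Category D] [Preadditive D] [HasZeroObject D] [HasShift D ℤ]
  [∀ n : ℤ, (shiftFunctor D n).Additive] [Pretriangulated D]

namespace Triangulated

variable (D) in
/-- The structure `Triangulated.Subcategory` of the older Mathlib (removed since),
restated with its original fields. -/
structure Subcategory where
  P : D → Prop
  zero' : ∃ (Z : D) (_ : IsZero Z), P Z
  shift (X : D) (n : ℤ) : P X → P (X⟦n⟧)
  ext₂' (T : Triangle D) (_ : T ∈ distTriang D) : P T.obj₁ → P T.obj₃ →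
    ∃ (Y : D) (_ : P Y), Nonempty (T.obj₂ ≅ Y)

end Triangulated

/-- A thick subcategory: a triangulated subcategory closed under direct summands. -/
def IsThick (S : Triangulated.Subcategory D) : Prop :=
  ∀ ⦃X Y : D⦄ (i : X ⟶ Y) (r : Y ⟶ X), i ≫ r = 𝟙 X → S.P Y → S.P X

theorem stmt7 (Z : Triangulated.Subcategory D) (hZthick : IsThick Z)
    (hZnonzero : ∃ X : D, Z.P X ∧ ¬ IsZero X)
    (hZsmallest : ∀ S : Triangulated.Subcategory D, IsThick S →
      (∃ X : D, S.P X ∧ ¬ IsZero X) → Z.P ≤ S.P)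
    (F : D) (hF : ¬ IsZero F) (p : D) (hp : Z.P p) (hp0 : ¬ IsZero p) :
    ∃ (n : ℤ) (f : F ⟶ p⟦n⟧), f ≠ 0 := by
  by_contra h
  push_neg at h
  -- the right-orthogonal-of-`p` style subcategory: objects with no nonzero graded maps to `p`
  set P : D → Prop := fun X => ∀ (n : ℤ) (f : X ⟶ p⟦n⟧), f = 0 with hP
  open ZeroObject in
  have Pzero : P 0 := fun n f => (isZero_zero D).eq_of_src f 0
  have Pshift : ∀ (X : D) (m : ℤ), P X → P (X⟦m⟧) := by
    intro X m hX n f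
    rw [← (shiftFunctor D (-m)).map_eq_zero_iff]
    have hu : ((shiftEquiv D m).unitIso.hom.app X ≫ f⟦-m⟧' ≫
        (shiftFunctorAdd' D n (-m) (n + -m) rfl).inv.app p : X ⟶ p⟦n + -m⟧) = 0 :=
      hX (n + -m) _
    simp only [Preadditive.IsIso.comp_left_eq_zero, Preadditive.IsIso.comp_right_eq_zero] at hu
    exact (Preadditive.IsIso.comp_right_eq_zero _ _).mp hu
  have Pext : ∀ (T : Triangle D), (T ∈ distTriang D) → P T.obj₁ → P T.obj₃ → P T.obj₂ := by
    intro T hT h₁ h₃ n f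
    obtain ⟨g, hg⟩ := Triangle.yoneda_exact₂ T hT f (h₁ n _)
    rw [hg, h₃ n g, Limits.comp_zero]
  set S : Triangulated.Subcategory D := (Triangulated.Subcategory.mk P ⟨0, isZero_zero D, Pzero⟩ Pshift
      (fun T hT h₁ h₃ => ⟨T.obj₂, Pext T hT h₁ h₃, ⟨Iso.refl _⟩⟩))
    with hS
  have hSthick : IsThick S := by
    intro X Y i r hir hY n f
    have : i ≫ (r ≫ f) = 0 := by rw [hY n (r ≫ f), Limits.comp_zero]
    rw [← Category.id_comp f, ← hir, Category.assoc, this]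
  have hSnonzero : ∃ X : D, S.P X ∧ ¬ IsZero X := ⟨F, fun n f => h n f, hF⟩
  have hpS : S.P p := hZsmallest S hSthick hSnonzero p hp
  have h0 : (shiftFunctorZero D ℤ).inv.app p = 0 := hpS 0 _
  apply hp0
  rw [IsZero.iff_id_eq_zero]
  calc 𝟙 p = (shiftFunctorZero D ℤ).inv.app p ≫ (shiftFunctorZero D ℤ).hom.app p := by simp
  _ = 0 := by rw [h0, Limits.zero_comp]

end Stmt7
end

section
/- Let D be a triangulated category, p an object of D such that P_p := {F ∈ D : Hom(F, p[n]) = 0 for all n ∈ ℤ} is a prime thick subcategory and p lies in the minimal thick subcategory strictly containing P_p. Then P_p is a minimal prime thick subcategory: there is no prime thick subcategory Q with Q ⊊ P_p. -/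
/-!
STATEMENT 8: Let `D` be a triangulated category and `p` an object such that
`P_p = {F : Hom^*(F, p) = 0}` is a prime thick subcategory whose minimal strictly
larger thick subcategory `P̄_p` contains `p`.  Then `P_p` is a minimal prime thick
subcategory: there is no prime thick subcategory `Q` with `Q ⊊ P_p`.
-/

open CategoryTheory Limits Pretriangulated

namespace Stmt8

open ZeroObject

variable {D : Type*} [Category D] [Preadditive D] [HasZeroObject D] [HasShift D ℤ]
  [∀ n : ℤ, (shiftFunctor D n).Additive] [Pretriangulated D]

namespace Triangulated

/-- The December 2024 Mathlib `Triangulated.Subcategory` (removed since), with its old fields. -/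
structure Subcategory (D : Type*) [Category D] [Preadditive D] [HasZeroObject D]
    [HasShift D ℤ] [∀ n : ℤ, (shiftFunctor D n).Additive] [Pretriangulated D] where
  P : D → Prop
  zero' : ∃ (Z : D) (_ : IsZero Z), P Z
  shift (X : D) (n : ℤ) : P X → P (X⟦n⟧)
  ext₂' (T : Triangle D) (_ : T ∈ distTriang D) : P T.obj₁ → P T.obj₃ →
    ∃ (Y : D) (_ : P Y), Nonempty (T.obj₂ ≅ Y)

end Triangulated

/-- A thick subcategory: a triangulated subcategory closed under direct summands. -/
def IsThick (S : Triangulated.Subcategory D) : Prop :=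
  ∀ ⦃X Y : D⦄ (i : X ⟶ Y) (r : Y ⟶ X), i ≫ r = 𝟙 X → S.P Y → S.P X

/-- A prime thick subcategory: the thick subcategories strictly containing it have a
smallest element. -/
def IsPrimeThick (P : Triangulated.Subcategory D) : Prop :=
  IsThick P ∧ ∃ B : Triangulated.Subcategory D,
    (IsThick B ∧ P.P < B.P) ∧
    ∀ J : Triangulated.Subcategory D, IsThick J → P.P < J.P → B.P ≤ J.P

/-- A thick subcategory is closed under isomorphisms. -/
lemma IsThick.mem_of_iso {S : Triangulated.Subcategory D} (hS : IsThick S)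
    {X Y : D} (e : X ≅ Y) (hY : S.P Y) : S.P X :=
  hS e.hom e.inv e.hom_inv_id hY

/-- For a thick subcategory, the extension property holds on the nose. -/
lemma IsThick.ext₂ {S : Triangulated.Subcategory D} (hS : IsThick S)
    (T : Triangle D) (hT : T ∈ distTriang D) (h₁ : S.P T.obj₁) (h₃ : S.P T.obj₃) :
    S.P T.obj₂ := by
  obtain ⟨Y, hY, ⟨e⟩⟩ := S.ext₂' T hT h₁ h₃
  exact hS.mem_of_iso e hY

section Separator

variable (Q : Triangulated.Subcategory D) (q : D)

/-- `W1 φ` : the "cone" of `φ` lies in `Q`. -/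
def W1 {A B : D} (φ : A ⟶ B) : Prop :=
  ∃ (c : D) (u : B ⟶ c) (v : c ⟶ A⟦(1 : ℤ)⟧), Q.P c ∧ Triangle.mk φ u v ∈ distTriang D

/-- `Cov A` : `A` is connected to `q` by a finite chain of morphisms with cones in `Q`. -/
def Cov (A : D) : Prop :=
  Relation.ReflTransGen (fun X Y => ∃ φ : X ⟶ Y, W1 Q φ) A q

/-- The separating predicate: every map from a cover of `q` to a shift of `F`
factors through an object of `Q`. -/
def JP (F : D) : Prop :=
  ∀ (n : ℤ) (A : D), Cov Q q A → ∀ f : A ⟶ F⟦n⟧,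
    ∃ (c : D) (g : A ⟶ c) (h : c ⟶ F⟦n⟧), Q.P c ∧ f = g ≫ h

variable {Q q}

lemma JP_of_mem_Q {F : D} (hF : Q.P F) : JP Q q F :=
  fun n A _ f => ⟨F⟦n⟧, f, 𝟙 _, Q.shift F n hF, (Category.comp_id f).symm⟩

lemma JP_zero : JP Q q 0 := by
  intro n A _ f
  obtain ⟨Z, hZiso, hZ⟩ := Q.zero'
  have hz : IsZero ((0 : D)⟦n⟧) := (shiftFunctor D n).map_isZero (isZero_zero D)
  exact ⟨Z, 0, 0, hZ, by rw [hz.eq_zero_of_tgt f, zero_comp]⟩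

lemma JP_shift {F : D} (hF : JP Q q F) (m : ℤ) : JP Q q (F⟦m⟧) := by
  intro n A hA f
  have e := (shiftFunctorAdd D m n).app F
  obtain ⟨c, g, h, hc, hfac⟩ := hF (m + n) A hA (f ≫ e.inv)
  refine ⟨c, g, h ≫ e.hom, hc, ?_⟩
  rw [← Category.assoc, ← hfac, Category.assoc, e.inv_hom_id]
  simp

lemma JP_retract {X Y : D} (i : X ⟶ Y) (r : Y ⟶ X) (hir : i ≫ r = 𝟙 X)
    (hY : JP Q q Y) : JP Q q X := by
  intro n A hA f
  obtain ⟨c, g, h, hc, hfac⟩ := hY n A hA (f ≫ (shiftFunctor D n).map i)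
  refine ⟨c, g, h ≫ (shiftFunctor D n).map r, hc, ?_⟩
  rw [← Category.assoc, ← hfac, Category.assoc, ← CategoryTheory.Functor.map_comp, hir,
    CategoryTheory.Functor.map_id]
  simp

/-- Sum of two maps factoring through `Q` factors through `Q` (via a biproduct). -/
lemma JP_sum_factor (hQthick : IsThick Q) {A F : D} {f₁ f₂ : A ⟶ F}
    {c₁ c₂ : D} (hc₁ : Q.P c₁) (hc₂ : Q.P c₂)
    (g₁ : A ⟶ c₁) (h₁ : c₁ ⟶ F) (g₂ : A ⟶ c₂) (h₂ : c₂ ⟶ F)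
    (hf₁ : f₁ = g₁ ≫ h₁) (hf₂ : f₂ = g₂ ≫ h₂) :
    ∃ (c : D) (g : A ⟶ c) (h : c ⟶ F), Q.P c ∧ f₁ + f₂ = g ≫ h := by
  have hbi : Q.P (c₁ ⊞ c₂) :=
    hQthick.ext₂ _ (binaryBiproductTriangle_distinguished c₁ c₂) hc₁ hc₂
  refine ⟨c₁ ⊞ c₂, biprod.lift g₁ g₂, biprod.desc h₁ h₂, hbi, ?_⟩
  rw [biprod.lift_desc, hf₁, hf₂]

/-- The key extension lemma for `JP`, using only pretriangulated axioms. -/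
lemma JP_ext₂ (hQthick : IsThick Q) (T : Triangle D) (hT : T ∈ distTriang D)
    (h₁ : JP Q q T.obj₁) (h₃ : JP Q q T.obj₃) : JP Q q T.obj₂ := by
  intro n A hA f
  -- the shifted triangle
  have hTn : (CategoryTheory.shiftFunctor (Triangle D) n).obj T ∈ distTriang D :=
    Triangle.shift_distinguished T hT n
  set Tn := (CategoryTheory.shiftFunctor (Triangle D) n).obj T with hTndef
  let a' : (shiftFunctor D n).obj T.obj₁ ⟶ (shiftFunctor D n).obj T.obj₂ := Tn.mor₁
  let b' : (shiftFunctor D n).obj T.obj₂ ⟶ (shiftFunctor D n).obj T.obj₃ := Tn.mor₂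
  -- Step 1: factor f ≫ b' through c₁ ∈ Q
  obtain ⟨c₁, g, h, hc₁, hfac1⟩ := h₃ n A hA (f ≫ b')
  -- Step 2: fiber of g, a new cover of q
  obtain ⟨A', σ, z, hTσ⟩ := distinguished_cocone_triangle₁ g
  have hWσ : W1 Q σ := ⟨c₁, g, z, hc₁, hTσ⟩
  have hA' : Cov Q q A' := Relation.ReflTransGen.head ⟨σ, hWσ⟩ hA
  -- Step 3: σ ≫ f kills b', lift it to Tn.obj₁
  have hσg : σ ≫ g = 0 := comp_distTriang_mor_zero₁₂ _ hTσ
  have h3 : (σ ≫ f) ≫ b' = 0 := by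
    rw [Category.assoc, hfac1, ← Category.assoc, hσg, zero_comp]
  obtain ⟨e1, he1₀⟩ := Triangle.coyoneda_exact₂ Tn hTn (σ ≫ f) h3
  have he1 : σ ≫ f = e1 ≫ a' := he1₀
  -- Step 4: factor e1 through c₄ ∈ Q
  obtain ⟨c₄, γ, δ, hc₄, hfac4⟩ := h₁ n A' hA' e1
  -- Step 5: cofiber of δ ≫ a'
  obtain ⟨R, r, t, hT₅⟩ := distinguished_cocone_triangle (δ ≫ a')
  have hδr : (δ ≫ a') ≫ r = 0 := comp_distTriang_mor_zero₁₂ _ hT₅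
  have h5 : σ ≫ (f ≫ r) = 0 := by
    calc σ ≫ (f ≫ r) = (σ ≫ f) ≫ r := (Category.assoc _ _ _).symm
      _ = ((γ ≫ δ) ≫ a') ≫ r := by rw [he1, hfac4]; rfl
      _ = γ ≫ ((δ ≫ a') ≫ r) := by simp only [Category.assoc]
      _ = 0 := by rw [hδr, comp_zero]
  -- Step 6: f ≫ r factors through c₁ via g
  obtain ⟨ρ, hρ0⟩ := Triangle.yoneda_exact₂ _ hTσ (f ≫ r) h5
  have hρ : f ≫ r = g ≫ ρ := hρ0
  -- Step 7 (Lemma M): refine c₁ by the fiber of ρ ≫ t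
  obtain ⟨c₂', w₂, z₂, hT₆⟩ := distinguished_cocone_triangle₁ (ρ ≫ t)
  have hc₂' : Q.P c₂' := by
    have := hQthick.ext₂ _ (inv_rot_of_distTriang _ hT₆)
      (Q.shift _ (-1) (Q.shift _ 1 hc₄)) hc₁
    exact this
  -- lift w₂ ≫ ρ along r
  have hwt : (w₂ ≫ ρ) ≫ t = 0 := by
    rw [Category.assoc]
    exact comp_distTriang_mor_zero₁₂ _ hT₆
  obtain ⟨lam0, hlam0⟩ := Triangle.coyoneda_exact₃ _ hT₅ (w₂ ≫ ρ) hwt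
  let lam : c₂' ⟶ (shiftFunctor D n).obj T.obj₂ := lam0
  have hlam : w₂ ≫ ρ = lam ≫ r := hlam0
  -- lift g along w₂
  have hrt : r ≫ t = 0 := comp_distTriang_mor_zero₂₃ _ hT₅
  have hgρt : g ≫ (ρ ≫ t) = 0 := by
    calc g ≫ (ρ ≫ t) = (g ≫ ρ) ≫ t := (Category.assoc _ _ _).symm
      _ = (f ≫ r) ≫ t := by rw [hρ]
      _ = 0 := by rw [Category.assoc, hrt, comp_zero]
  obtain ⟨g₂0, hg₂0⟩ := Triangle.coyoneda_exact₂ _ hT₆ g hgρt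
  let g₂ : A ⟶ c₂' := g₂0
  have hg₂ : g = g₂ ≫ w₂ := hg₂0
  -- the difference f - g₂ ≫ lam kills r
  have hdiff : (f - g₂ ≫ lam) ≫ r = 0 := by
    calc (f - g₂ ≫ lam) ≫ r = f ≫ r - g₂ ≫ (lam ≫ r) := by
          rw [Preadditive.sub_comp, Category.assoc]
      _ = f ≫ r - g₂ ≫ (w₂ ≫ ρ) := by rw [hlam]
      _ = f ≫ r - g ≫ ρ := by rw [← Category.assoc, ← hg₂]; rfl
      _ = 0 := sub_eq_zero.mpr hρ
  obtain ⟨h₀0, hh₀0⟩ := Triangle.coyoneda_exact₂ _ hT₅ (f - g₂ ≫ lam) hdiff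
  let h₀ : A ⟶ c₄ := h₀0
  have hh₀ : f - g₂ ≫ lam = h₀ ≫ (δ ≫ a') := hh₀0
  have hfeq : f = h₀ ≫ (δ ≫ a') + g₂ ≫ lam := by
    rw [← sub_eq_iff_eq_add, hh₀]
  obtain ⟨c, g', h', hc, hfac⟩ := JP_sum_factor hQthick hc₄ hc₂' h₀ (δ ≫ a') g₂ lam
    rfl rfl
  exact ⟨c, g', h', hc, by rw [hfeq, hfac]⟩

/-- Covers of `q` remain in any thick triangulated subcategory containing `Q` and `q`. -/
lemma Cov_mem {P : Triangulated.Subcategory D} (hPthick : IsThick P)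
    (hQleP : ∀ X, Q.P X → P.P X) (hq : P.P q) {A : D} (hA : Cov Q q A) : P.P A := by
  induction hA using Relation.ReflTransGen.head_induction_on with
  | refl => exact hq
  | head h _ ih =>
    obtain ⟨φ, c, u, v, hc, hdist⟩ := h
    exact hPthick.ext₂ _ (inv_rot_of_distTriang _ hdist) (P.shift _ (-1) (hQleP c hc)) ih

end Separator

theorem stmt8 (p : D) (P Pbar : Triangulated.Subcategory D)
    (hPdef : ∀ F : D, P.P F ↔ ∀ (n : ℤ) (f : F ⟶ p⟦n⟧), f = 0)
    (hPthick : IsThick P)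
    (hPbar : (IsThick Pbar ∧ P.P < Pbar.P) ∧
      ∀ J : Triangulated.Subcategory D, IsThick J → P.P < J.P → Pbar.P ≤ J.P)
    (hppbar : Pbar.P p) :
    ¬ ∃ Q : Triangulated.Subcategory D, IsPrimeThick Q ∧ Q.P < P.P := by
  rintro ⟨Q, ⟨hQthick, B, ⟨hBthick, hQltB⟩, hBmin⟩, hQltP⟩
  have hQleP : ∀ X, Q.P X → P.P X := fun X hX => hQltP.le X hX
  -- p ∉ P
  have hpP : ¬ P.P p := by
    intro hp
    have hι : (shiftFunctorZero D ℤ).inv.app p = 0 := (hPdef p).mp hp 0 _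
    have hzero : IsZero p := by
      rw [IsZero.iff_id_eq_zero]
      have := (shiftFunctorZero D ℤ).inv_hom_id_app p
      rw [hι, zero_comp] at this
      exact this.symm
    have hall : ∀ F, P.P F := by
      intro F
      rw [hPdef]
      intro n f
      exact ((shiftFunctor D n).map_isZero hzero).eq_zero_of_tgt f
    exact hPbar.1.2.not_ge (fun X _ => hall X)
  have hpQ : ¬ Q.P p := fun h => hpP (hQleP p h)
  -- B ≤ P, and pick q ∈ B \ Q
  have hBleP : B.P ≤ P.P := hBmin P hPthick hQltP
  obtain ⟨hQleB, hnle⟩ := lt_iff_le_not_ge.mp hQltB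
  have : ∃ q, B.P q ∧ ¬ Q.P q := by
    by_contra hcon
    push_neg at hcon
    exact hnle (fun X hX => hcon X hX)
  obtain ⟨q, hqB, hqQ⟩ := this
  have hqP : P.P q := hBleP q hqB
  -- the separating subcategory J
  let J : Triangulated.Subcategory D :=
    { P := JP Q q
      zero' := ⟨0, isZero_zero D, JP_zero⟩
      shift := fun X m hX => JP_shift hX m
      ext₂' := fun T hT h₁ h₃ => ⟨T.obj₂, JP_ext₂ hQthick T hT h₁ h₃, ⟨Iso.refl _⟩⟩ }
  have hJP : J.P = JP Q q := rfl
  have hJthick : IsThick J := by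
    intro X Y i r hir hY
    exact JP_retract i r hir hY
  have hQleJ : Q.P ≤ J.P := fun X hX => JP_of_mem_Q hX
  have hpJ : J.P p := by
    intro n A hA f
    have hAP : P.P A := Cov_mem hPthick hQleP hqP hA
    have hf : f = 0 := (hPdef A).mp hAP n f
    obtain ⟨Z, hZiso, hZ⟩ := Q.zero'
    exact ⟨Z, 0, 0, hZ, by rw [hf, zero_comp]⟩
  have hQltJ : Q.P < J.P := lt_iff_le_not_ge.mpr ⟨hQleJ, fun hle => hpQ (hle p hpJ)⟩
  have hBleJ : B.P ≤ J.P := hBmin J hJthick hQltJ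
  have hqJ : J.P q := hBleJ q hqB
  -- extract the contradiction: q is a retract of an object of Q
  obtain ⟨c, g, h, hc, hfac⟩ :=
    hqJ 0 q Relation.ReflTransGen.refl ((shiftFunctorZero D ℤ).inv.app q)
  have hretr : g ≫ (h ≫ (shiftFunctorZero D ℤ).hom.app q) = 𝟙 q := by
    rw [← Category.assoc, ← hfac]
    exact (shiftFunctorZero D ℤ).inv_hom_id_app q
  exact hqQ (hQthick g _ hretr hc)

end Stmt8
end
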